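/- Qubit lower bound: With M, N, λ, θ as in the qubit setting, the minimum over density matrices ρ with diagonal (λ, 1−λ) in the M basis of max{⟨v_1|ρ|v_1⟩, ⟨v_2|ρ|v_2⟩} equals (√(1−λ) sinθ − √λ cosθ)² when cot(2θ) < −2√(λ(1−λ))/(1−2λ); equals 1/2 when |cot(2θ)| ≤ 2√(λ(1−λ))/(1−2λ); and equals (√λ sinθ − √(1−λ) cosθ)² when cot(2θ) > 2√(λ(1−λ))/(1−2λ). -/

import Mathlib

open Matrix ComplexOrder Real
set_option maxHeartbeats 1000000

/-- Measurement outcome probability `⟨v|ρ|v⟩` (real part). -/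
noncomputable def outcome (ρ : Matrix (Fin 2) (Fin 2) ℂ) (v : Fin 2 → ℂ) : ℝ :=
  (star v ⬝ᵥ ρ.mulVec v).re

private lemma psd2 (a b c : ℝ) (ha : 0 ≤ a) (hc : 0 ≤ c) (h : b ^ 2 ≤ a * c) :
    (!![(a : ℂ), (b : ℂ); (b : ℂ), (c : ℂ)]).PosSemidef := by
  rw [Matrix.posSemidef_iff_dotProduct_mulVec]
  constructor
  · ext i j
    fin_cases i <;> fin_cases j <;>
      simp [Matrix.conjTranspose_apply]
  · intro v
    have hv : star v ⬝ᵥ (!![(a : ℂ), (b:ℂ); (b:ℂ), (c:ℂ)]).mulVec v =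
        ((a * ((v 0).re^2 + (v 0).im^2) + c * ((v 1).re^2 + (v 1).im^2)
          + 2*b*((v 0).re*(v 1).re + (v 0).im*(v 1).im) : ℝ) : ℂ) := by
      simp [dotProduct, Matrix.mulVec, Fin.sum_univ_two, Complex.ext_iff,
        Complex.mul_re, Complex.mul_im]
      simp [← Complex.ofReal_pow]
      constructor <;> ring
    rw [hv, Complex.zero_le_real]
    set p := (v 0).re; set q := (v 0).im; set r := (v 1).re; set s := (v 1).im
    rcases eq_or_lt_of_le hc with h0 | h0
    · have hb : b = 0 := by nlinarith [sq_nonneg b]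
      rw [hb, ← h0]
      nlinarith [sq_nonneg p, sq_nonneg q]
    · nlinarith [sq_nonneg (b*p+c*r), sq_nonneg (b*q+c*s),
        mul_nonneg (sub_nonneg.2 h) (add_nonneg (sq_nonneg p) (sq_nonneg q))]

private lemma outcome_eq (ρ : Matrix (Fin 2) (Fin 2) ℂ) (hH : ρ.IsHermitian)
    (a c u w : ℝ) (h00 : ρ 0 0 = (a:ℂ)) (h11 : ρ 1 1 = (c:ℂ)) :
    outcome ρ ![(u:ℂ),(w:ℂ)] = a*u^2 + c*w^2 + 2*(ρ 0 1).re*u*w := by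
  have h10 : ρ 1 0 = star (ρ 0 1) := (hH.apply 1 0).symm
  simp [outcome, dotProduct, Matrix.mulVec, Fin.sum_univ_two, h00, h11, h10,
    Complex.mul_re, Complex.add_re]
  ring

private lemma offdiag_bound (lam : ℝ) (hl0 : 0 < lam)
    (ρ : Matrix (Fin 2) (Fin 2) ℂ) (hP : ρ.PosSemidef)
    (h00 : ρ 0 0 = (lam : ℂ)) (h11 : ρ 1 1 = ((1 - lam : ℝ) : ℂ)) :
    (ρ 0 1).re ^ 2 ≤ lam * (1 - lam) := by
  have h10 : ρ 1 0 = star (ρ 0 1) := (hP.1.apply 1 0).symm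
  have h2 := hP.dotProduct_mulVec_nonneg ![ρ 0 1, (-lam : ℂ)]
  set z := ρ 0 1 with hz
  have hv : star ![z, (-lam : ℂ)] ⬝ᵥ ρ.mulVec ![z, (-lam : ℂ)] =
      ((lam * (lam * (1 - lam) - (z.re^2 + z.im^2)) : ℝ) : ℂ) := by
    simp [dotProduct, Matrix.mulVec, Fin.sum_univ_two, h00, h11, h10, ← hz,
      Complex.ext_iff, Complex.mul_re, Complex.mul_im]
    simp [← Complex.ofReal_pow]
    constructor <;> ring
  rw [hv, Complex.zero_le_real] at h2
  nlinarith [sq_nonneg z.im]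
/-- qubit lower bound.  With `N = {v₁, v₂}` the rotated basis and `ρ`
ranging over density matrices with diagonal `(λ, 1-λ)` in the computational basis,
the minimum of `max{⟨v₁|ρ|v₁⟩, ⟨v₂|ρ|v₂⟩}` equals
`(√(1−λ) sinθ − √λ cosθ)²` when `cot 2θ < −2√(λ(1−λ))/(1−2λ)`,
`1/2` when `|cot 2θ| ≤ 2√(λ(1−λ))/(1−2λ)`, and
`(√λ sinθ − √(1−λ) cosθ)²` when `cot 2θ > 2√(λ(1−λ))/(1−2λ)`. -/
theorem qubit_lower_bound (θ lam : ℝ) (hθ0 : 0 < θ) (hθ1 : θ < π / 2)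
    (hl0 : 0 < lam) (hl1 : lam < 1 / 2)
    (v₁ v₂ : Fin 2 → ℂ)
    (hv₁ : v₁ = ![(Real.cos θ : ℂ), (-(Real.sin θ) : ℂ)])
    (hv₂ : v₂ = ![(Real.sin θ : ℂ), (Real.cos θ : ℂ)]) :
    (Real.cos (2 * θ) / Real.sin (2 * θ) <
        -(2 * Real.sqrt (lam * (1 - lam)) / (1 - 2 * lam)) →
      IsLeast {t : ℝ | ∃ ρ : Matrix (Fin 2) (Fin 2) ℂ, ρ.PosSemidef ∧
          ρ 0 0 = (lam : ℂ) ∧ ρ 1 1 = ((1 - lam : ℝ) : ℂ) ∧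
          t = max (outcome ρ v₁) (outcome ρ v₂)}
        ((Real.sqrt (1 - lam) * Real.sin θ - Real.sqrt lam * Real.cos θ) ^ 2)) ∧
    (|Real.cos (2 * θ) / Real.sin (2 * θ)| ≤
        2 * Real.sqrt (lam * (1 - lam)) / (1 - 2 * lam) →
      IsLeast {t : ℝ | ∃ ρ : Matrix (Fin 2) (Fin 2) ℂ, ρ.PosSemidef ∧
          ρ 0 0 = (lam : ℂ) ∧ ρ 1 1 = ((1 - lam : ℝ) : ℂ) ∧
          t = max (outcome ρ v₁) (outcome ρ v₂)}
        (1 / 2)) ∧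
    (2 * Real.sqrt (lam * (1 - lam)) / (1 - 2 * lam) <
        Real.cos (2 * θ) / Real.sin (2 * θ) →
      IsLeast {t : ℝ | ∃ ρ : Matrix (Fin 2) (Fin 2) ℂ, ρ.PosSemidef ∧
          ρ 0 0 = (lam : ℂ) ∧ ρ 1 1 = ((1 - lam : ℝ) : ℂ) ∧
          t = max (outcome ρ v₁) (outcome ρ v₂)}
        ((Real.sqrt lam * Real.sin θ - Real.sqrt (1 - lam) * Real.cos θ) ^ 2)) := by
  have hπ : θ < π := lt_trans hθ1 (by linarith [Real.pi_pos])
  have hs : 0 < Real.sin θ := Real.sin_pos_of_pos_of_lt_pi hθ0 hπ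
  have hc : 0 < Real.cos θ := Real.cos_pos_of_mem_Ioo ⟨by linarith [Real.pi_pos], hθ1⟩
  have hpy : Real.sin θ ^ 2 + Real.cos θ ^ 2 = 1 := Real.sin_sq_add_cos_sq θ
  have hsin2 : Real.sin (2 * θ) = 2 * Real.sin θ * Real.cos θ := Real.sin_two_mul θ
  have hcos2 : Real.cos (2 * θ) = Real.cos θ ^ 2 - Real.sin θ ^ 2 := Real.cos_two_mul' θ
  have hs2 : 0 < Real.sin (2 * θ) := by rw [hsin2]; positivity
  have h2l : 0 < 1 - 2 * lam := by linarith
  have h1l : 0 < 1 - lam := by linarith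
  have hsl : Real.sqrt lam ^ 2 = lam := Real.sq_sqrt hl0.le
  have hsl1 : Real.sqrt (1 - lam) ^ 2 = 1 - lam := Real.sq_sqrt h1l.le
  have hrm : Real.sqrt (lam * (1 - lam)) = Real.sqrt lam * Real.sqrt (1 - lam) :=
    Real.sqrt_mul hl0.le _
  set r : ℝ := Real.sqrt lam * Real.sqrt (1 - lam) with hrdef
  have hr2 : r ^ 2 = lam * (1 - lam) := by rw [hrdef, mul_pow, hsl, hsl1]
  have hrpos : 0 < r := by
    rw [hrdef]; exact mul_pos (Real.sqrt_pos.2 hl0) (Real.sqrt_pos.2 h1l)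
  -- outcome formulas
  have ev : ∀ ρ : Matrix (Fin 2) (Fin 2) ℂ, ρ.IsHermitian → ρ 0 0 = (lam : ℂ) →
      ρ 1 1 = ((1 - lam : ℝ) : ℂ) →
      outcome ρ v₁ = lam * Real.cos θ ^ 2 + (1 - lam) * Real.sin θ ^ 2
          - 2 * (ρ 0 1).re * Real.cos θ * Real.sin θ ∧
      outcome ρ v₂ = lam * Real.sin θ ^ 2 + (1 - lam) * Real.cos θ ^ 2
          + 2 * (ρ 0 1).re * Real.sin θ * Real.cos θ := by
    intro ρ hH h00 h11
    constructor
    · have e := outcome_eq ρ hH lam (1 - lam) (Real.cos θ) (-(Real.sin θ)) h00 h11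
      rw [hv₁, show (![(Real.cos θ : ℂ), (-(Real.sin θ) : ℂ)])
          = ![((Real.cos θ : ℝ) : ℂ), ((-(Real.sin θ) : ℝ) : ℂ)] by norm_num]
      rw [e]; ring
    · have e := outcome_eq ρ hH lam (1 - lam) (Real.sin θ) (Real.cos θ) h00 h11
      rw [hv₂, e]
  -- value identities
  have hV1 : (Real.sqrt (1 - lam) * Real.sin θ - Real.sqrt lam * Real.cos θ) ^ 2
      = lam * Real.cos θ ^ 2 + (1 - lam) * Real.sin θ ^ 2 - 2 * r * Real.cos θ * Real.sin θ := by
    rw [hrdef]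
    linear_combination Real.sin θ ^ 2 * hsl1 + Real.cos θ ^ 2 * hsl
  have hV3 : (Real.sqrt lam * Real.sin θ - Real.sqrt (1 - lam) * Real.cos θ) ^ 2
      = lam * Real.sin θ ^ 2 + (1 - lam) * Real.cos θ ^ 2 - 2 * r * Real.sin θ * Real.cos θ := by
    rw [hrdef]
    linear_combination Real.sin θ ^ 2 * hsl + Real.cos θ ^ 2 * hsl1
  -- generic witness constructor
  have wit : ∀ b : ℝ, b ^ 2 ≤ lam * (1 - lam) →
      ∃ ρ : Matrix (Fin 2) (Fin 2) ℂ, ρ.PosSemidef ∧ ρ 0 0 = (lam : ℂ) ∧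
        ρ 1 1 = ((1 - lam : ℝ) : ℂ) ∧
        outcome ρ v₁ = lam * Real.cos θ ^ 2 + (1 - lam) * Real.sin θ ^ 2
            - 2 * b * Real.cos θ * Real.sin θ ∧
        outcome ρ v₂ = lam * Real.sin θ ^ 2 + (1 - lam) * Real.cos θ ^ 2
            + 2 * b * Real.sin θ * Real.cos θ := by
    intro b hb
    have hP := psd2 lam b (1 - lam) hl0.le h1l.le hb
    have h00 : (!![(lam : ℂ), (b : ℂ); (b : ℂ), ((1 - lam : ℝ) : ℂ)]) 0 0 = (lam : ℂ) := by simp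
    have h11 : (!![(lam : ℂ), (b : ℂ); (b : ℂ), ((1 - lam : ℝ) : ℂ)]) 1 1
        = ((1 - lam : ℝ) : ℂ) := by simp
    have h01 : ((!![(lam : ℂ), (b : ℂ); (b : ℂ), ((1 - lam : ℝ) : ℂ)]) 0 1).re = b := by simp
    obtain ⟨e1, e2⟩ := ev _ hP.1 h00 h11
    exact ⟨_, hP, h00, h11, by rw [e1, h01], by rw [e2, h01]⟩
  refine ⟨?_, ?_, ?_⟩
  -- CASE 1
  · intro hcase
    rw [← neg_div, div_lt_div_iff₀ hs2 h2l, hrm] at hcase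
    constructor
    · obtain ⟨ρ, hP, h00, h11, e1, e2⟩ := wit r hr2.le
      refine ⟨ρ, hP, h00, h11, ?_⟩
      have hle : outcome ρ v₂ ≤ outcome ρ v₁ := by
        rw [e1, e2]
        rw [hsin2, hcos2] at hcase
        nlinarith
      rw [max_eq_left hle, e1, hV1]
    · rintro t ⟨ρ, hP, h00, h11, rfl⟩
      obtain ⟨e1, e2⟩ := ev ρ hP.1 h00 h11
      have hx := offdiag_bound lam hl0 ρ hP h00 h11
      have hxr : (ρ 0 1).re ≤ r := by nlinarith
      refine le_trans ?_ (le_max_left _ _)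
      rw [e1, hV1]
      nlinarith [mul_pos hc hs]
  -- CASE 2
  · intro hcase
    rw [abs_div, abs_of_pos hs2, div_le_div_iff₀ hs2 h2l, hrm] at hcase
    set b : ℝ := -((1 - 2 * lam) * (Real.cos θ ^ 2 - Real.sin θ ^ 2)) / (4 * Real.sin θ * Real.cos θ) with hbdef
    have hk : (0:ℝ) < 4 * Real.sin θ * Real.cos θ := by positivity
    have habs := le_abs_self (Real.cos (2 * θ))
    have habs' := neg_abs_le (Real.cos (2 * θ))
    have hd1 : -(2 * r) * (2 * Real.sin θ * Real.cos θ) ≤ (1 - 2*lam) * (Real.cos θ ^2 - Real.sin θ ^2) := by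
      rw [← hcos2, ← hsin2]; nlinarith
    have hd2 : (1 - 2*lam) * (Real.cos θ ^2 - Real.sin θ ^2) ≤ 2 * r * (2 * Real.sin θ * Real.cos θ) := by
      rw [← hcos2, ← hsin2]; nlinarith
    have hb2 : b ^ 2 ≤ lam * (1 - lam) := by
      rw [hbdef, div_pow, div_le_iff₀ (by positivity), ← hr2]
      nlinarith
    constructor
    · obtain ⟨ρ, hP, h00, h11, e1, e2⟩ := wit b hb2
      refine ⟨ρ, hP, h00, h11, ?_⟩
      have hb' : 2 * b * Real.cos θ * Real.sin θ
          = -((1 - 2 * lam) * (Real.cos θ ^ 2 - Real.sin θ ^ 2)) / 2 := by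
        rw [hbdef]; field_simp; ring
      have e1' : outcome ρ v₁ = 1 / 2 := by
        rw [e1, hb']; field_simp; linear_combination (1:ℝ) * hpy
      have e2' : outcome ρ v₂ = 1 / 2 := by
        rw [e2, show 2 * b * Real.sin θ * Real.cos θ
          = -((1 - 2 * lam) * (Real.cos θ ^ 2 - Real.sin θ ^ 2)) / 2 by rw [hbdef]; field_simp; ring]
        field_simp; linear_combination (1:ℝ) * hpy
      rw [e1', e2', max_self]
    · rintro t ⟨ρ, hP, h00, h11, rfl⟩
      obtain ⟨e1, e2⟩ := ev ρ hP.1 h00 h11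
      have hsum : outcome ρ v₁ + outcome ρ v₂ = 1 := by
        rw [e1, e2]; linear_combination hpy
      rcases le_total (outcome ρ v₁) (outcome ρ v₂) with h | h
      · rw [max_eq_right h]; linarith
      · rw [max_eq_left h]; linarith
  -- CASE 3
  · intro hcase
    rw [div_lt_div_iff₀ h2l hs2, hrm] at hcase
    constructor
    · obtain ⟨ρ, hP, h00, h11, e1, e2⟩ := wit (-r) (by rw [neg_pow]; simpa using hr2.le)
      refine ⟨ρ, hP, h00, h11, ?_⟩
      have hle : outcome ρ v₁ ≤ outcome ρ v₂ := by
        rw [e1, e2]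
        rw [hsin2, hcos2] at hcase
        nlinarith
      rw [max_eq_right hle, e2, hV3]
      ring
    · rintro t ⟨ρ, hP, h00, h11, rfl⟩
      obtain ⟨e1, e2⟩ := ev ρ hP.1 h00 h11
      have hx := offdiag_bound lam hl0 ρ hP h00 h11
      have hxr : -r ≤ (ρ 0 1).re := by nlinarith
      refine le_trans ?_ (le_max_right _ _)
      rw [e2, hV3]
      nlinarith [mul_pos hs hc]
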